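/- Let G be a graph without isolated vertices and let c be a NAP-colouring of G. Let G_red and G_blue be the subgraphs of G induced by the red and blue edges respectively. Then {G_red, G_blue} is a stable separation of G: they are edge-disjoint with union G, V(G_red) ∩ V(G_blue) is a stable set, and both V(G_red) \ V(G_blue) and V(G_blue) \ V(G_red) are nonempty. -/

import Mathlib

open scoped Classical

namespace NAC

variable {V : Type*}

/-- Number of edges of `G` in the list `l` whose colour under `c` is `b`. -/
noncomputable def cCount (G : SimpleGraph V) (c : G.edgeSet → Bool) (b : Bool)
    (l : List (Sym2 V)) : ℕ :=
  (l.filter fun e => decide (∃ h : e ∈ G.edgeSet, c ⟨e, h⟩ = b)).length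

/-- `c` is a NAC-colouring of `G`: it is surjective (both colours are used) and no
cycle of `G` contains exactly one edge of either colour. -/
def IsNAC (G : SimpleGraph V) (c : G.edgeSet → Bool) : Prop :=
  Function.Surjective c ∧
  ∀ ⦃u : V⦄ (w : G.Walk u u), w.IsCycle →
    cCount G c true w.edges ≠ 1 ∧ cCount G c false w.edges ≠ 1

/-- The number of NAC-colourings of `G`, divided by two. -/
noncomputable def nacNum (G : SimpleGraph V) : ℕ :=
  {c : G.edgeSet → Bool | IsNAC G c}.ncard / 2

end NAC

namespace NAC

/-- `c` is a NAP-colouring of `G`: it is surjective, every 3-cycle is monochromatic, and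
there is no path `(u₁,u₂,u₃,u₄)` of length 3 whose consecutive edges alternate in colour. -/
def IsNAP (G : SimpleGraph V) (c : G.edgeSet → Bool) : Prop :=
  Function.Surjective c ∧
  (∀ (u v w : V) (h1 : G.Adj u v) (h2 : G.Adj v w) (_ : G.Adj w u),
    c ⟨s(u, v), G.mem_edgeSet.mpr h1⟩ = c ⟨s(v, w), G.mem_edgeSet.mpr h2⟩) ∧
  (∀ (u1 u2 u3 u4 : V) (h1 : G.Adj u1 u2) (h2 : G.Adj u2 u3) (h3 : G.Adj u3 u4),
    u1 ≠ u3 → u2 ≠ u4 → u1 ≠ u4 →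
    ¬(c ⟨s(u1, u2), G.mem_edgeSet.mpr h1⟩ ≠ c ⟨s(u2, u3), G.mem_edgeSet.mpr h2⟩ ∧
      c ⟨s(u2, u3), G.mem_edgeSet.mpr h2⟩ ≠ c ⟨s(u3, u4), G.mem_edgeSet.mpr h3⟩))

end NAC

namespace NAC

/-- The subgraph of `G` spanned by the edges coloured `b` by `c`. -/
def monoSubgraph (G : SimpleGraph V) (c : G.edgeSet → Bool) (b : Bool) : G.Subgraph where
  verts := {x | ∃ y, ∃ h : G.Adj x y, c ⟨s(x, y), G.mem_edgeSet.mpr h⟩ = b}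
  Adj u v := ∃ h : G.Adj u v, c ⟨s(u, v), G.mem_edgeSet.mpr h⟩ = b
  adj_sub := by rintro u v ⟨h, -⟩; exact h
  edge_vert := by rintro u v ⟨h, hc⟩; exact ⟨v, h, hc⟩
  symm := by
    refine ⟨?_⟩
    rintro u v ⟨h, hc⟩
    refine ⟨h.symm, ?_⟩
    have : (⟨s(v, u), G.mem_edgeSet.mpr h.symm⟩ : G.edgeSet)
        = ⟨s(u, v), G.mem_edgeSet.mpr h⟩ := Subtype.ext Sym2.eq_swap
    rw [this]; exact hc

end NAC


namespace NAC

lemma cswap {V : Type*} (G : SimpleGraph V) (c : G.edgeSet → Bool) {u v : V} (h : G.Adj u v) :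
    c ⟨s(v, u), G.mem_edgeSet.mpr h.symm⟩ = c ⟨s(u, v), G.mem_edgeSet.mpr h⟩ :=
  congrArg c (Subtype.ext Sym2.eq_swap)

end NAC

open NAC in
/-- The red and blue subgraphs of a NAP-colouring form a stable separation. -/
theorem statement3 {V : Type*} (G : SimpleGraph V)
    (hnoiso : ∀ v : V, ∃ u, G.Adj v u)
    (c : G.edgeSet → Bool) (hc : IsNAP G c) :
    Disjoint (monoSubgraph G c true).edgeSet (monoSubgraph G c false).edgeSet ∧
    (monoSubgraph G c true).edgeSet ∪ (monoSubgraph G c false).edgeSet = G.edgeSet ∧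
    (∀ u ∈ (monoSubgraph G c true).verts ∩ (monoSubgraph G c false).verts,
      ∀ v ∈ (monoSubgraph G c true).verts ∩ (monoSubgraph G c false).verts, ¬ G.Adj u v) ∧
    ((monoSubgraph G c true).verts \ (monoSubgraph G c false).verts).Nonempty ∧
    ((monoSubgraph G c false).verts \ (monoSubgraph G c true).verts).Nonempty := by
  obtain ⟨hsurj, htri, hpath⟩ := hc
  -- stability first
  have hstable : ∀ u ∈ (monoSubgraph G c true).verts ∩ (monoSubgraph G c false).verts,
      ∀ v ∈ (monoSubgraph G c true).verts ∩ (monoSubgraph G c false).verts, ¬ G.Adj u v := by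
    rintro u ⟨⟨ut, hutadj, hutc⟩, ⟨uf, hufadj, hufc⟩⟩ v ⟨⟨vt, hvtadj, hvtc⟩, ⟨vf, hvfadj, hvfc⟩⟩ hadj
    cases hb : c ⟨s(u, v), G.mem_edgeSet.mpr hadj⟩ with
    | true =>
      -- path uf - u - v - vf with colours false, true, false
      have hufv : uf ≠ v := by
        rintro rfl
        rw [hufc] at hb; simp at hb
      have huvf : u ≠ vf := by
        rintro rfl
        rw [cswap G c hvfadj, hvfc] at hb; simp at hb
      have hufvf : uf ≠ vf := by
        rintro rfl
        have := htri u v uf hadj hvfadj hufadj.symm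
        rw [hb, hvfc] at this; simp at this
      refine hpath uf u v vf hufadj.symm hadj hvfadj hufv huvf hufvf ?_
      rw [cswap G c hufadj, hufc, hb, hvfc]
      exact ⟨by decide, by decide⟩
    | false =>
      -- path ut - u - v - vt with colours true, false, true
      have hutv : ut ≠ v := by
        rintro rfl
        rw [hutc] at hb; simp at hb
      have huvt : u ≠ vt := by
        rintro rfl
        rw [cswap G c hvtadj, hvtc] at hb; simp at hb
      have hutvt : ut ≠ vt := by
        rintro rfl
        have := htri u v ut hadj hvtadj hutadj.symm
        rw [hb, hvtc] at this; simp at this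
      refine hpath ut u v vt hutadj.symm hadj hvtadj hutv huvt hutvt ?_
      rw [cswap G c hutadj, hutc, hb, hvtc]
      exact ⟨by decide, by decide⟩
  refine ⟨?_, ?_, hstable, ?_, ?_⟩
  · rw [Set.disjoint_left]
    intro e het hef
    induction e using Sym2.ind with
    | _ u v =>
      rw [SimpleGraph.Subgraph.mem_edgeSet] at het hef
      obtain ⟨h1, hc1⟩ := het
      obtain ⟨h2, hc2⟩ := hef
      rw [hc1] at hc2; simp at hc2
  · ext e
    induction e using Sym2.ind with
    | _ u v =>
      simp only [Set.mem_union, SimpleGraph.Subgraph.mem_edgeSet, SimpleGraph.mem_edgeSet]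
      constructor
      · rintro (⟨h, -⟩ | ⟨h, -⟩) <;> exact h
      · intro h
        cases hb : c ⟨s(u, v), G.mem_edgeSet.mpr h⟩ with
        | true => exact Or.inl ⟨h, hb⟩
        | false => exact Or.inr ⟨h, hb⟩
  · obtain ⟨⟨e, hm⟩, hce⟩ := hsurj true
    revert hm hce
    induction e using Sym2.ind with
    | _ u v =>
      intro hm hce
      have hadj : G.Adj u v := G.mem_edgeSet.mp hm
      have hu : u ∈ (monoSubgraph G c true).verts := ⟨v, hadj, hce⟩
      have hv : v ∈ (monoSubgraph G c true).verts := by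
        refine ⟨u, hadj.symm, ?_⟩
        rw [cswap G c hadj]; exact hce
      by_cases huf : u ∈ (monoSubgraph G c false).verts
      · by_cases hvf : v ∈ (monoSubgraph G c false).verts
        · exact absurd hadj (hstable u ⟨hu, huf⟩ v ⟨hv, hvf⟩)
        · exact ⟨v, hv, hvf⟩
      · exact ⟨u, hu, huf⟩
  · obtain ⟨⟨e, hm⟩, hce⟩ := hsurj false
    revert hm hce
    induction e using Sym2.ind with
    | _ u v =>
      intro hm hce
      have hadj : G.Adj u v := G.mem_edgeSet.mp hm
      have hu : u ∈ (monoSubgraph G c false).verts := ⟨v, hadj, hce⟩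
      have hv : v ∈ (monoSubgraph G c false).verts := by
        refine ⟨u, hadj.symm, ?_⟩
        rw [cswap G c hadj]; exact hce
      by_cases hut : u ∈ (monoSubgraph G c true).verts
      · by_cases hvt : v ∈ (monoSubgraph G c true).verts
        · exact absurd hadj (hstable u ⟨hut, hu⟩ v ⟨hvt, hv⟩)
        · exact ⟨v, hv, hvt⟩
      · exact ⟨u, hu, hut⟩
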